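/- arXiv:0811.3125 — 3 statements merged into one kernel-verified Lean document; each statement's English description precedes it below -/
import Mathlib

section
/- The supremum over k ≥ 1 of (C⁽²⁾_k)^{1/(2k)} equals its limit as k → ∞, and both equal (3/2)√3, where C⁽²⁾_k = (1/(2k+1))·binom(3k,k). -/
open Filter

/-- The type-2 Fuss-Catalan number `C⁽²⁾_k = (1/(2k+1))·binom(3k,k)`, as a real number. -/
noncomputable def fussCatalan2 (k : ℕ) : ℝ := (1 / (2 * (k : ℝ) + 1)) * ((3 * k).choose k : ℝ)


lemma key (k : ℕ) : ((3*(k+1)).choose (k+1) : ℝ) * ((k+1)*(2*k+1)*(2*k+2)) =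
    ((3*k).choose k : ℝ) * ((3*k+1)*(3*k+2)*(3*k+3)) := by
  have h1 := Nat.choose_mul_factorial_mul_factorial (show k ≤ 3*k by omega)
  have h2 := Nat.choose_mul_factorial_mul_factorial (show k+1 ≤ 3*(k+1) by omega)
  rw [show 3*k - k = 2*k by omega] at h1
  rw [show 3*(k+1) - (k+1) = 2*k+2 by omega, show 3*(k+1) = 3*k+3 by omega] at h2
  have h1' : ((3*k).choose k : ℝ) * (Nat.factorial k : ℝ) * (Nat.factorial (2*k) : ℝ)
      = (Nat.factorial (3*k) : ℝ) := by exact_mod_cast congrArg (Nat.cast (R := ℝ)) h1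
  have h2' : ((3*k+3).choose (k+1) : ℝ) * (Nat.factorial (k+1) : ℝ) * (Nat.factorial (2*k+2) : ℝ)
      = (Nat.factorial (3*k+3) : ℝ) := by exact_mod_cast congrArg (Nat.cast (R := ℝ)) h2
  have e1 : (Nat.factorial (3*k+3) : ℝ) = (3*k+3) * (3*k+2) * (3*k+1) * (Nat.factorial (3*k) : ℝ) := by
    rw [show 3*k+3 = (3*k+2)+1 by ring, Nat.factorial_succ, show 3*k+2 = (3*k+1)+1 by ring,
      Nat.factorial_succ, Nat.factorial_succ]
    push_cast; ring
  have e2 : (Nat.factorial (k+1) : ℝ) = (k+1) * (Nat.factorial k : ℝ) := by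
    rw [Nat.factorial_succ]; push_cast; ring
  have e3 : (Nat.factorial (2*k+2) : ℝ) = (2*k+2) * (2*k+1) * (Nat.factorial (2*k) : ℝ) := by
    rw [show 2*k+2 = (2*k+1)+1 by ring, Nat.factorial_succ, Nat.factorial_succ]; push_cast; ring
  have hF : (0:ℝ) < (Nat.factorial k : ℝ) := by positivity
  have hG : (0:ℝ) < (Nat.factorial (2*k) : ℝ) := by positivity
  rw [show 3*(k+1) = 3*k+3 by omega]
  rw [e2, e3, e1, ← h1'] at h2'
  nlinarith [h2', hF, hG, mul_pos hF hG]



lemma ub (k : ℕ) : ((3*k).choose k : ℝ) ≤ (27/4)^k := by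
  induction k with
  | zero => simp
  | succ k ih =>
    have hk := key k
    have hD : (0:ℝ) < ((k:ℝ)+1)*(2*k+1)*(2*k+2) := by positivity
    have hineq : ((3*(k+1)).choose (k+1) : ℝ) * (((k:ℝ)+1)*(2*k+1)*(2*k+2))
        ≤ (27/4)^(k+1) * (((k:ℝ)+1)*(2*k+1)*(2*k+2)) := by
      rw [hk, pow_succ]
      nlinarith [mul_le_mul_of_nonneg_right ih (show (0:ℝ) ≤ (3*k+1)*(3*k+2)*(3*k+3) by positivity)]
    exact le_of_mul_le_mul_right (by push_cast at hineq ⊢; linarith) hD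

lemma lb (k : ℕ) : (27/4:ℝ)^k ≤ (3*k+1) * ((3*k).choose k : ℝ) := by
  induction k with
  | zero => simp
  | succ k ih =>
    have hk := key k
    have hD : (0:ℝ) < ((k:ℝ)+1)*(2*k+1)*(2*k+2) := by positivity
    have hA : (0:ℝ) ≤ ((3*k).choose k : ℝ) := by positivity
    have hpoly : (0:ℝ) ≤ 4*(3*(k:ℝ)+4)*((3*k+1)*(3*k+2)*(3*k+3))
        - 27*(3*(k:ℝ)+1)*(((k:ℝ)+1)*(2*k+1)*(2*k+2)) := by nlinarith [sq_nonneg (k:ℝ), show (0:ℝ) ≤ k from Nat.cast_nonneg k]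
    have hineq : (27/4:ℝ)^(k+1) * (((k:ℝ)+1)*(2*k+1)*(2*k+2))
        ≤ ((3*((k:ℝ)+1)+1) * ((3*(k+1)).choose (k+1) : ℝ)) * (((k:ℝ)+1)*(2*k+1)*(2*k+2)) := by
      have h2 : ((3*((k:ℝ)+1)+1) * ((3*(k+1)).choose (k+1) : ℝ)) * (((k:ℝ)+1)*(2*k+1)*(2*k+2))
          = (3*((k:ℝ)+1)+1) * (((3*k).choose k : ℝ) * ((3*(k:ℝ)+1)*(3*k+2)*(3*k+3))) := by
        rw [mul_assoc, hk]
      rw [h2, pow_succ]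
      nlinarith [mul_le_mul_of_nonneg_right ih hD.le, mul_nonneg hA hpoly]
    have := le_of_mul_le_mul_right hineq hD
    push_cast; linarith

/-- `sup_{k ≥ 1} (C⁽²⁾_k)^{1/2k} = lim_{k→∞} (C⁽²⁾_k)^{1/2k} = (3/2)√3`. -/
theorem stmt4 :
    Tendsto (fun k : ℕ => (fussCatalan2 k) ^ (1 / (2 * (k : ℝ)))) atTop
      (nhds ((3 / 2) * Real.sqrt 3)) ∧
    (∀ k : ℕ, 1 ≤ k → (fussCatalan2 k) ^ (1 / (2 * (k : ℝ))) ≤ (3 / 2) * Real.sqrt 3) ∧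
    (⨆ k : {k : ℕ // 1 ≤ k}, (fussCatalan2 k) ^ (1 / (2 * ((k : ℕ) : ℝ)))) =
      (3 / 2) * Real.sqrt 3 := by
  set c : ℝ := (3/2) * Real.sqrt 3 with hcdef
  have hc : (0:ℝ) < c := by positivity
  have hc2 : (27/4 : ℝ) = c^2 := by
    rw [hcdef, mul_pow, Real.sq_sqrt (by norm_num : (3:ℝ) ≥ 0)]; norm_num
  have hCnn : ∀ k, (0:ℝ) ≤ fussCatalan2 k := by
    intro k; unfold fussCatalan2; positivity
  have hub : ∀ k, fussCatalan2 k ≤ c ^ (2*k) := by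
    intro k
    have h1 : fussCatalan2 k ≤ ((3*k).choose k : ℝ) := by
      unfold fussCatalan2
      have hpos : (0:ℝ) < 2*(k:ℝ)+1 := by positivity
      have : (1:ℝ)/(2*(k:ℝ)+1) ≤ 1 := by
        rw [div_le_one hpos]; linarith [Nat.cast_nonneg (α := ℝ) k]
      nlinarith [Nat.cast_nonneg (α := ℝ) ((3*k).choose k)]
    calc fussCatalan2 k ≤ _ := h1
      _ ≤ (27/4:ℝ)^k := ub k
      _ = c ^ (2*k) := by rw [hc2, ← pow_mul]
  have hlb : ∀ k : ℕ, c ^ (2*k) ≤ ((3*(k:ℝ)+1)*(2*(k:ℝ)+1)) * fussCatalan2 k := by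
    intro k
    have hpos : (0:ℝ) < 2*(k:ℝ)+1 := by positivity
    have h2 : ((3*(k:ℝ)+1)*(2*(k:ℝ)+1)) * fussCatalan2 k = (3*(k:ℝ)+1) * ((3*k).choose k : ℝ) := by
      unfold fussCatalan2; field_simp
    rw [h2]
    calc c ^ (2*k) = (27/4:ℝ)^k := by rw [hc2, ← pow_mul]
      _ ≤ _ := by have := lb k; push_cast at this ⊢; linarith
  -- part 2
  have part2 : ∀ k : ℕ, 1 ≤ k → (fussCatalan2 k) ^ (1 / (2 * (k : ℝ))) ≤ c := by
    intro k hk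
    have hkpos : (0:ℝ) < (k:ℝ) := by exact_mod_cast hk
    have he : (0:ℝ) < 1 / (2*(k:ℝ)) := by positivity
    have h := Real.rpow_le_rpow (hCnn k) (hub k) he.le
    calc (fussCatalan2 k) ^ (1 / (2 * (k : ℝ))) ≤ (c ^ (2*k)) ^ (1 / (2 * (k : ℝ))) := h
      _ = c := by
        rw [← Real.rpow_natCast c (2*k), ← Real.rpow_mul hc.le]
        rw [show ((2*k : ℕ) : ℝ) * (1 / (2*(k:ℝ))) = 1 by push_cast; field_simp]
        exact Real.rpow_one c
  -- g tendsto 1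
  have htk : Tendsto (fun k : ℕ => (2*(k:ℝ)) ^ (1/(2*(k:ℝ)))) atTop (nhds 1) := by
    have h2k : Tendsto (fun k : ℕ => 2*(k:ℝ)) atTop atTop :=
      (tendsto_natCast_atTop_atTop (R := ℝ)).const_mul_atTop (by norm_num)
    exact tendsto_rpow_div.comp h2k
  have hg : Tendsto (fun k : ℕ => ((3*(k:ℝ)+1)*(2*(k:ℝ)+1)) ^ (1/(2*(k:ℝ)))) atTop (nhds 1) := by
    have hupper : Tendsto (fun k : ℕ => ((2*(k:ℝ)) ^ (1/(2*(k:ℝ))))^(4:ℕ)) atTop (nhds 1) := by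
      have := htk.pow 4
      simpa using this
    refine tendsto_of_tendsto_of_tendsto_of_le_of_le' tendsto_const_nhds hupper ?_ ?_
    · filter_upwards [eventually_ge_atTop 1] with k hk
      have hkpos : (0:ℝ) < (k:ℝ) := by exact_mod_cast hk
      refine Real.one_le_rpow ?_ (by positivity)
      nlinarith
    · filter_upwards [eventually_ge_atTop 1] with k hk
      have hkpos : (1:ℝ) ≤ (k:ℝ) := by exact_mod_cast hk
      have hk2 : (1:ℝ) ≤ (k:ℝ)^2 := by nlinarith
      have hb : ((3*(k:ℝ)+1)*(2*(k:ℝ)+1)) ≤ (2*(k:ℝ))^(4:ℕ) := by nlinarith [sq_nonneg ((k:ℝ)^2 - (k:ℝ)), sq_nonneg ((k:ℝ)-1)]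
      have := Real.rpow_le_rpow (by positivity) hb (by positivity : (0:ℝ) ≤ 1/(2*(k:ℝ)))
      calc ((3*(k:ℝ)+1)*(2*(k:ℝ)+1)) ^ (1/(2*(k:ℝ))) ≤ ((2*(k:ℝ))^(4:ℕ)) ^ (1/(2*(k:ℝ))) := this
        _ = ((2*(k:ℝ)) ^ (1/(2*(k:ℝ))))^(4:ℕ) := by
          rw [← Real.rpow_natCast ((2*(k:ℝ)) ^ (1/(2*(k:ℝ)))) 4, ← Real.rpow_mul (by positivity),
            ← Real.rpow_natCast (2*(k:ℝ)) 4, ← Real.rpow_mul (by positivity)]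
          congr 1; ring
  -- part 1
  have part1 : Tendsto (fun k : ℕ => (fussCatalan2 k) ^ (1 / (2 * (k : ℝ)))) atTop (nhds c) := by
    have hlow : Tendsto (fun k : ℕ => c / ((3*(k:ℝ)+1)*(2*(k:ℝ)+1)) ^ (1/(2*(k:ℝ)))) atTop (nhds c) := by
      have := (tendsto_const_nhds (x := c) (f := atTop (α := ℕ))).div hg one_ne_zero
      rw [div_one] at this
      exact this
    refine tendsto_of_tendsto_of_tendsto_of_le_of_le' hlow tendsto_const_nhds ?_ ?_
    · filter_upwards [eventually_ge_atTop 1] with k hk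
      have hkpos : (0:ℝ) < (k:ℝ) := by exact_mod_cast hk
      have hq : (0:ℝ) < (3*(k:ℝ)+1)*(2*(k:ℝ)+1) := by positivity
      have hdiv : c^(2*k) / ((3*(k:ℝ)+1)*(2*(k:ℝ)+1)) ≤ fussCatalan2 k := by
        rw [div_le_iff₀ hq]; linarith [hlb k, mul_comm (fussCatalan2 k) ((3*(k:ℝ)+1)*(2*(k:ℝ)+1))]
      have h := Real.rpow_le_rpow (by positivity) hdiv (by positivity : (0:ℝ) ≤ 1/(2*(k:ℝ)))
      calc c / ((3*(k:ℝ)+1)*(2*(k:ℝ)+1)) ^ (1/(2*(k:ℝ)))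
          = (c^(2*k) / ((3*(k:ℝ)+1)*(2*(k:ℝ)+1))) ^ (1/(2*(k:ℝ))) := by
            rw [Real.div_rpow (by positivity) hq.le]
            congr 1
            rw [← Real.rpow_natCast c (2*k), ← Real.rpow_mul hc.le,
              show ((2*k : ℕ) : ℝ) * (1 / (2*(k:ℝ))) = 1 by push_cast; field_simp,
              Real.rpow_one]
        _ ≤ (fussCatalan2 k) ^ (1/(2*(k:ℝ))) := h
    · filter_upwards [eventually_ge_atTop 1] with k hk
      exact part2 k hk
  -- part 3
  refine ⟨part1, part2, ?_⟩
  haveI : Nonempty {k : ℕ // 1 ≤ k} := ⟨⟨1, le_refl 1⟩⟩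
  have hbdd : BddAbove (Set.range fun k : {k : ℕ // 1 ≤ k} =>
      (fussCatalan2 (k:ℕ)) ^ (1 / (2 * ((k : ℕ) : ℝ)))) := by
    refine ⟨c, ?_⟩
    rintro x ⟨⟨k, hk⟩, rfl⟩
    exact part2 k hk
  refine le_antisymm (ciSup_le fun k => part2 k k.2) ?_
  refine le_of_tendsto part1 ?_
  filter_upwards [eventually_ge_atTop 1] with k hk
  exact le_ciSup hbdd ⟨k, hk⟩
end

section
/- For every n ≥ 1, the pairing ϖ_n = {{1, 2n}, {2,3}, {4,5}, …, {2n−2, 2n−1}} is the unique non-crossing pair partition π of {1, …, 2n} such that π ∨ Î = 1_{2n} in the lattice of non-crossing partitions, where Î = {{1,2}, {3,4}, …, {2n−1, 2n}} is the interval pair partition. -/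
/-- `f` is a (fixed-point-free) pairing of `{0, …, 2n−1}`, i.e. an involution
pairing the points; each block of the pair partition is `{i, f i}`. -/
def IsPairing (n : ℕ) (f : ℕ → ℕ) : Prop :=
  ∀ i < 2 * n, f i < 2 * n ∧ f (f i) = i ∧ f i ≠ i

/-- The pairing `f` is non-crossing: there are no `a < b < f a < f b`. -/
def IsNonCrossing (n : ℕ) (f : ℕ → ℕ) : Prop :=
  ¬ ∃ a b, a < 2 * n ∧ b < 2 * n ∧ a < b ∧ b < f a ∧ f a < f b

/-- The interval pairing `Î = {{0,1}, {2,3}, …, {2n−2, 2n−1}}`, as a relation. -/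
def intervalRel (n : ℕ) (i j : ℕ) : Prop :=
  i < 2 * n ∧ j < 2 * n ∧ ((j = i + 1 ∧ i % 2 = 0) ∨ (i = j + 1 ∧ j % 2 = 0))

/-- `π ∨ Î = 1_{2n}`: the equivalence relation generated by the blocks of the pairing `f`
together with the blocks of the interval pairing relates all points of `{0, …, 2n−1}`. -/
def JoinIsFull (n : ℕ) (f : ℕ → ℕ) : Prop :=
  ∀ i < 2 * n, ∀ j < 2 * n,
    Relation.EqvGen (fun a b => (a < 2 * n ∧ b = f a) ∨ intervalRel n a b) i j

/-- The pairing `ϖ_n = {{0, 2n−1}, {1,2}, {3,4}, …, {2n−3, 2n−2}}` (0-indexed version of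
`{{1, 2n}, {2,3}, …, {2n−2, 2n−1}}`). -/
def varpi (n : ℕ) : ℕ → ℕ := fun i =>
  if i = 0 then 2 * n - 1 else if i = 2 * n - 1 then 0
  else if i % 2 = 1 then i + 1 else i - 1

/-! ### varpi computation lemmas -/

lemma varpi_zero (n : ℕ) : varpi n 0 = 2 * n - 1 := by simp [varpi]

lemma varpi_last {n : ℕ} (hn : 1 ≤ n) : varpi n (2 * n - 1) = 0 := by
  unfold varpi; rw [if_neg (by omega), if_pos rfl]

lemma varpi_odd {n i : ℕ} (h1 : i % 2 = 1) (h2 : i < 2 * n - 1) : varpi n i = i + 1 := by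
  unfold varpi; rw [if_neg (by omega), if_neg (by omega), if_pos h1]

lemma varpi_even {n i : ℕ} (h1 : i % 2 = 0) (h2 : 0 < i) (h3 : i < 2 * n) :
    varpi n i = i - 1 := by
  unfold varpi; rw [if_neg (by omega), if_neg (by omega), if_neg (by omega)]

lemma varpi_pairing {n : ℕ} (hn : 1 ≤ n) : IsPairing n (varpi n) := by
  intro i hi
  rcases eq_or_ne i 0 with rfl | h0
  · rw [varpi_zero]
    exact ⟨by omega, by rw [varpi_last hn], by omega⟩
  · rcases eq_or_ne i (2 * n - 1) with rfl | hl
    · rw [varpi_last hn]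
      exact ⟨by omega, by rw [varpi_zero], by omega⟩
    · rcases Nat.even_or_odd i with he | ho
      · have h2 : i % 2 = 0 := Nat.even_iff.mp he
        rw [varpi_even h2 (by omega) hi]
        refine ⟨by omega, ?_, by omega⟩
        rw [varpi_odd (by omega) (by omega)]; omega
      · have h2 : i % 2 = 1 := Nat.odd_iff.mp ho
        rw [varpi_odd h2 (by omega)]
        refine ⟨by omega, ?_, by omega⟩
        rw [varpi_even (by omega) (by omega) (by omega)]; omega

lemma varpi_nc {n : ℕ} (hn : 1 ≤ n) : IsNonCrossing n (varpi n) := by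
  rintro ⟨a, b, ha, hb, hab, h1, h2⟩
  rcases eq_or_ne a 0 with rfl | ha0
  · rw [varpi_zero] at h1 h2
    have hlt : varpi n b < 2 * n := (varpi_pairing hn b hb).1
    omega
  · rcases eq_or_ne a (2 * n - 1) with rfl | hal
    · omega
    · rcases Nat.even_or_odd a with he | ho
      · rw [varpi_even (Nat.even_iff.mp he) (by omega) ha] at h1; omega
      · rw [varpi_odd (Nat.odd_iff.mp ho) (by omega)] at h1; omega

lemma varpi_adj {n : ℕ} (hn : 1 ≤ n) {k : ℕ} (hk : k + 1 < 2 * n) :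
    Relation.EqvGen (fun a b => (a < 2 * n ∧ b = varpi n a) ∨ intervalRel n a b) k (k + 1) := by
  rcases Nat.even_or_odd k with he | ho
  · exact Relation.EqvGen.rel _ _
      (Or.inr ⟨by omega, hk, Or.inl ⟨rfl, Nat.even_iff.mp he⟩⟩)
  · exact Relation.EqvGen.rel _ _
      (Or.inl ⟨by omega, (varpi_odd (Nat.odd_iff.mp ho) (by omega)).symm⟩)

lemma varpi_join {n : ℕ} (hn : 1 ≤ n) : JoinIsFull n (varpi n) := by
  intro i hi j hj
  have h0 : ∀ m, m < 2 * n →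
      Relation.EqvGen (fun a b => (a < 2 * n ∧ b = varpi n a) ∨ intervalRel n a b) 0 m := by
    intro m
    induction m with
    | zero => intro _; exact Relation.EqvGen.refl 0
    | succ k ih =>
      intro hm
      exact Relation.EqvGen.trans _ _ _ (ih (by omega)) (varpi_adj hn hm)
  exact Relation.EqvGen.trans _ _ _ (Relation.EqvGen.symm _ _ (h0 i hi)) (h0 j hj)

/-! ### generic lemmas about non-crossing pairings -/

/-- A fixed-point-free involution on a finite set pairs up its elements, so the
cardinality is even. -/
lemma even_card_inv : ∀ m : ℕ, ∀ f : ℕ → ℕ, ∀ s : Finset ℕ, s.card = m →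
    (∀ x ∈ s, f x ∈ s) → (∀ x ∈ s, f (f x) = x) → (∀ x ∈ s, f x ≠ x) →
    Even m := by
  intro m
  induction m using Nat.strong_induction_on with
  | _ m ih =>
    intro f s hcard h1 h2 h3
    rcases s.eq_empty_or_nonempty with rfl | ⟨x, hx⟩
    · have hm0 : m = 0 := by simpa using hcard.symm
      simp [hm0]
    · have hfx : f x ∈ s := h1 x hx
      have hne : f x ≠ x := h3 x hx
      have hfxe : f x ∈ s.erase x := Finset.mem_erase.mpr ⟨hne, hfx⟩
      set t := (s.erase x).erase (f x) with ht
      have hmem : ∀ y, y ∈ t ↔ y ∈ s ∧ y ≠ x ∧ y ≠ f x := by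
        intro y; simp only [ht, Finset.mem_erase]; tauto
      have hc1 : (s.erase x).card = m - 1 := by
        rw [Finset.card_erase_of_mem hx, hcard]
      have hc2 : t.card = m - 2 := by
        rw [ht, Finset.card_erase_of_mem hfxe, hc1]
        omega
      have hm2 : 2 ≤ m := by
        have := Finset.card_pos.mpr ⟨f x, hfxe⟩
        omega
      have hev : Even (m - 2) := by
        refine ih (m - 2) (by omega) f t hc2 ?_ ?_ ?_
        · intro y hy
          rw [hmem] at hy ⊢
          obtain ⟨hys, hyx, hyfx⟩ := hy
          refine ⟨h1 y hys, ?_, ?_⟩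
          · intro h
            exact hyfx (by rw [← h2 y hys, h])
          · intro h
            exact hyx (by rw [← h2 y hys, h, h2 x hx])
        · intro y hy; exact h2 y ((hmem y).mp hy).1
        · intro y hy; exact h3 y ((hmem y).mp hy).1
      obtain ⟨k, hk⟩ := hev
      exact ⟨k + 1, by omega⟩

/-- Nesting: a point strictly inside a pair of a non-crossing pairing is matched
strictly inside that pair. -/
lemma nest {n : ℕ} {f : ℕ → ℕ} (hp : IsPairing n f) (hnc : IsNonCrossing n f)
    {i x : ℕ} (hi : i < 2 * n) (h1 : i < x) (h2 : x < f i) :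
    i < f x ∧ f x < f i := by
  obtain ⟨hfi, hffi, hfine⟩ := hp i hi
  have hx : x < 2 * n := lt_trans h2 hfi
  obtain ⟨hfx, hffx, hfxne⟩ := hp x hx
  constructor
  · by_contra h
    push_neg at h
    have hlt : f x < i := by
      rcases eq_or_lt_of_le h with he | hl
      · exact absurd (by rw [← he, hffx] : f i = x) (by omega)
      · exact hl
    exact hnc ⟨f x, i, hfx, hi, hlt, by rw [hffx]; exact h1, by rw [hffx]; exact h2⟩
  · by_contra h
    push_neg at h
    have hlt : f i < f x := by
      rcases eq_or_lt_of_le h with he | hl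
      · exact absurd (by rw [← hffi, he, hffx] : i = x) (by omega)
      · exact hl
    exact hnc ⟨i, x, hi, hx, h1, h2, hlt⟩

/-- Parity: each pair of a non-crossing pairing joins points of opposite parity. -/
lemma pair_parity {n : ℕ} {f : ℕ → ℕ} (hp : IsPairing n f) (hnc : IsNonCrossing n f)
    {i : ℕ} (hi : i < 2 * n) : f i % 2 ≠ i % 2 := by
  have key : ∀ j, j < 2 * n → j < f j → f j % 2 ≠ j % 2 := by
    intro j hj hlt
    have hfj : f j < 2 * n := (hp j hj).1
    have hev : Even ((Finset.Ioo j (f j)).card) := by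
      refine even_card_inv _ f (Finset.Ioo j (f j)) rfl ?_ ?_ ?_
      · intro x hx
        rw [Finset.mem_Ioo] at hx ⊢
        exact nest hp hnc hj hx.1 hx.2
      · intro x hx
        rw [Finset.mem_Ioo] at hx
        exact (hp x (lt_trans hx.2 hfj)).2.1
      · intro x hx
        rw [Finset.mem_Ioo] at hx
        exact (hp x (lt_trans hx.2 hfj)).2.2
    rw [Nat.card_Ioo] at hev
    obtain ⟨k, hk⟩ := hev
    omega
  obtain ⟨hfi, hffi, hne⟩ := hp i hi
  rcases lt_trichotomy i (f i) with h | h | h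
  · exact key i hi h
  · exact absurd h.symm hne
  · have := key (f i) hfi (by rw [hffi]; exact h)
    rw [hffi] at this
    omega

/-- Closure: if a non-crossing pairing with full join has a pair `{p, q}` with `p` even,
`q` odd and `p < q`, then that pair must be `{0, 2n-1}`. -/
lemma pairClosure {n : ℕ} {f : ℕ → ℕ} (hp : IsPairing n f) (hnc : IsNonCrossing n f)
    (hj : JoinIsFull n f) (hn : 1 ≤ n) {p q : ℕ} (hq : q < 2 * n) (hpq : p < q)
    (hfp : f p = q) (hpe : p % 2 = 0) (hqe : q % 2 = 1) : p = 0 ∧ q = 2 * n - 1 := by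
  have hp2n : p < 2 * n := lt_trans hpq hq
  have hfq : f q = p := by rw [← hfp, (hp p hp2n).2.1]
  have key : ∀ x y, Relation.EqvGen (fun a b => (a < 2 * n ∧ b = f a) ∨ intervalRel n a b) x y →
      ((p ≤ x ∧ x ≤ q) ↔ (p ≤ y ∧ y ≤ q)) := by
    intro x y h
    induction h with
    | rel x y hr =>
      rcases hr with ⟨hx2n, rfl⟩ | ⟨hx2n, hy2n, hint⟩
      · obtain ⟨hfx, hffx, hfxne⟩ := hp x hx2n
        constructor
        · rintro ⟨ha, hb⟩
          rcases eq_or_lt_of_le ha with rfl | ha'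
          · rw [hfp]; omega
          · rcases eq_or_lt_of_le hb with rfl | hb'
            · rw [hfq]; omega
            · have := nest hp hnc hp2n ha' (by rw [hfp]; exact hb')
              rw [hfp] at this
              omega
        · rintro ⟨ha, hb⟩
          by_contra hxo
          push_neg at hxo
          rcases lt_or_ge x p with hxp | hxp
          · have h1 : f x ≠ q := fun h => by
              have : x = p := by rw [← hfq, ← h, hffx]
              omega
            have h2 : f x ≠ p := fun h => by
              have : x = q := by rw [← hfp, ← h, hffx]
              omega
            exact hnc ⟨x, p, hx2n, hp2n, hxp, by omega, by rw [hfp]; omega⟩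
          · have hqx : q < x := by
              rcases lt_or_ge q x with h | h
              · exact h
              · exact absurd (hxo hxp) (by omega)
            have h1 : f x ≠ p := fun h => by
              have : x = q := by rw [← hfp, ← h, hffx]
              omega
            have h2 : f x ≠ q := fun h => by
              have : x = p := by rw [← hfq, ← h, hffx]
              omega
            refine hnc ⟨p, f x, hp2n, by omega, by omega, by rw [hfp]; omega,
              by rw [hfp, hffx]; omega⟩
      · rcases hint with ⟨hyx, hxe⟩ | ⟨hxy, hye⟩ <;> omega
    | refl x => exact Iff.rfl
    | symm _ _ _ ih => exact ih.symm
    | trans _ _ _ _ _ ih1 ih2 => exact ih1.trans ih2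
  constructor
  · by_contra hp0
    have h0 := (key p 0 (hj p hp2n 0 (by omega))).mp ⟨le_rfl, hpq.le⟩
    omega
  · by_contra hq1
    have h1 := (key p (2 * n - 1) (hj p hp2n (2 * n - 1) (by omega))).mp ⟨le_rfl, hpq.le⟩
    omega

/-- `ϖ_n` is the unique non-crossing pairing `π` of `{0, …, 2n−1}` with `π ∨ Î = 1_{2n}`,
where `Î` is the interval pairing. -/
theorem stmt14 (n : ℕ) (hn : 1 ≤ n) :
    (IsPairing n (varpi n) ∧ IsNonCrossing n (varpi n) ∧ JoinIsFull n (varpi n)) ∧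
    (∀ f : ℕ → ℕ, IsPairing n f → IsNonCrossing n f → JoinIsFull n f →
      ∀ i < 2 * n, f i = varpi n i) := by
  refine ⟨⟨varpi_pairing hn, varpi_nc hn, varpi_join hn⟩, ?_⟩
  intro f hp hnc hj i hi
  have h02 : (0 : ℕ) < 2 * n := by omega
  obtain ⟨hf0, hff0, hne0⟩ := hp 0 h02
  have hpar0 : f 0 % 2 ≠ 0 % 2 := pair_parity hp hnc h02
  have h0 : f 0 = 2 * n - 1 :=
    (pairClosure hp hnc hj hn (q := f 0) hf0 (by omega) rfl (by omega) (by omega)).2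
  have hoddcase : ∀ k, k % 2 = 1 → k < 2 * n - 1 → f k = k + 1 := by
    intro k hk1 hk2
    have hk2n : k < 2 * n := by omega
    obtain ⟨hfk, hffk, hnek⟩ := hp k hk2n
    have hparu : f k % 2 ≠ k % 2 := pair_parity hp hnc hk2n
    rcases lt_or_ge (f k) k with hlt | hge
    · obtain ⟨_, hq⟩ := pairClosure hp hnc hj hn (q := k) hk2n hlt hffk (by omega) hk1
      omega
    · by_contra hne1
      have hge3 : k + 3 ≤ f k := by omega
      have hnest := nest hp hnc hk2n (show k < k + 1 by omega) (show k + 1 < f k by omega)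
      obtain ⟨hfx, hffx, hnex⟩ := hp (k + 1) (by omega)
      have hpx : f (k + 1) % 2 ≠ (k + 1) % 2 := pair_parity hp hnc (by omega)
      have hgtx : k + 1 < f (k + 1) := by omega
      obtain ⟨hc1, _⟩ := pairClosure hp hnc hj hn (q := f (k + 1)) hfx hgtx rfl (by omega) (by omega)
      omega
  rcases eq_or_ne i 0 with rfl | hi0
  · rw [h0, varpi_zero]
  · rcases eq_or_ne i (2 * n - 1) with rfl | hil
    · rw [varpi_last hn, ← h0, hff0]
    · rcases Nat.even_or_odd i with he | ho
      · have h2 : i % 2 = 0 := Nat.even_iff.mp he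
        have hprev : f (i - 1) = i := by
          rw [hoddcase (i - 1) (by omega) (by omega)]; omega
        rw [varpi_even h2 (by omega) hi, ← hprev, (hp (i - 1) (by omega)).2.1, hprev]
      · have h2 : i % 2 = 1 := Nat.odd_iff.mp ho
        rw [varpi_odd h2 (by omega), hoddcase i h2 (by omega)]
end

section
/- Let μ_λ be a symmetric Borel probability measure on ℝ (depending on a parameter λ > 1) supported in ℝ \ (−δ, δ) for some δ > 0, whose negative second and fourth moments are m_{−2}(μ_λ) = ∫ x^{−2} dμ_λ and m_{−4}(μ_λ) = ∫ x^{−4} dμ_λ. Suppose R_μ(z) = z + (v−1)z³ + O(z⁵) and that the Cauchy transform G_{μ_λ} is the compositional inverse (near 0) of B_λ(z) = R_μ(z) + (1 − √(1+4λ²z²))/(2z). Then m_{−2}(μ_λ) = 1/(λ²−1) and m_{−4}(μ_λ) = (λ⁴ − 1 + v)/(λ²−1)⁴. -/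
open MeasureTheory Filter


lemma sqrt_aux' (u s p : ℝ) (h0 : 0 ≤ u) (h1 : u ≤ 1) (hsq : s^2 = 1+u)
    (hs1 : 1 ≤ s) (hpd : p = 1 + u/2 - u^2/8) : |s - p| ≤ u^3/8 := by
  have hp : 1 ≤ p := by rw [hpd]; nlinarith
  have hspd : (s - p)*(s + p) = u^3/8 - u^4/64 := by rw [hpd]; linear_combination hsq
  have hnum : 0 ≤ u^3/8 - u^4/64 := by nlinarith [pow_nonneg h0 3, pow_nonneg h0 4]
  have hsp : 2 ≤ s + p := by linarith
  have hge : 0 ≤ s - p := by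
    by_contra hlt
    push_neg at hlt
    have hneg : (s - p) * (s + p) < 0 := mul_neg_of_neg_of_pos (by linarith) (by linarith)
    linarith
  have h5 : 0 ≤ (s-p)*(s+p-2) := mul_nonneg hge (by linarith)
  have h6 : (s-p)*(s+p) = (s-p)*(s+p-2) + 2*(s-p) := by ring
  have h7 : 0 ≤ u^4/64 := by positivity
  rw [abs_le]
  constructor
  · linarith [pow_nonneg h0 3]
  · linarith

lemma sqrt_aux (u : ℝ) (h0 : 0 ≤ u) (h1 : u ≤ 1) :
    |Real.sqrt (1+u) - (1 + u/2 - u^2/8)| ≤ u^3/8 := by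
  refine sqrt_aux' u _ _ h0 h1 (Real.sq_sqrt (by linarith)) ?_ rfl
  have h2 : Real.sqrt 1 ≤ Real.sqrt (1+u) := Real.sqrt_le_sqrt (by linarith)
  simpa using h2

lemma coeff_aux (c₁ c₃ K ε : ℝ) (hε : 0 < ε)
    (h : ∀ z : ℝ, 0 < z → z < ε → |c₁*z + c₃*z^3| ≤ K*z^5) : c₁ = 0 ∧ c₃ = 0 := by
  have hev : ∀ᶠ z in nhdsWithin (0:ℝ) (Set.Ioi 0), 0 < z ∧ z < ε := by
    filter_upwards [Ioo_mem_nhdsGT hε] with z hz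
    exact ⟨hz.1, hz.2⟩
  have h1 : ∀ z : ℝ, 0 < z → z < ε → |c₁ + c₃*z^2| ≤ K*z^4 := by
    intro z hz hz'
    have hh := h z hz hz'
    have he : c₁*z + c₃*z^3 = z*(c₁ + c₃*z^2) := by ring
    rw [he, abs_mul, abs_of_pos hz] at hh
    have h2 : z * |c₁ + c₃*z^2| ≤ z * (K*z^4) := by nlinarith
    exact le_of_mul_le_mul_left h2 hz
  have hc1 : c₁ = 0 := by
    have hb : ∀ᶠ z in nhdsWithin (0:ℝ) (Set.Ioi 0), |c₁| ≤ |c₃| * z^2 + K*z^4 := by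
      filter_upwards [hev] with z hz
      obtain ⟨hz, hz'⟩ := hz
      have h2 := h1 z hz hz'
      have h3 : |c₁| ≤ |c₁ + c₃*z^2| + |c₃*z^2| := by
        calc |c₁| = |(c₁ + c₃*z^2) + -(c₃*z^2)| := by congr 1; ring
          _ ≤ |c₁ + c₃*z^2| + |-(c₃*z^2)| := abs_add_le _ _
          _ = |c₁ + c₃*z^2| + |c₃*z^2| := by rw [abs_neg]
      rw [abs_mul, abs_of_nonneg (sq_nonneg z)] at h3
      linarith
    have hlim : Tendsto (fun z : ℝ => |c₃| * z^2 + K*z^4) (nhdsWithin 0 (Set.Ioi 0)) (nhds 0) := by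
      have hc : Continuous (fun z : ℝ => |c₃| * z^2 + K*z^4) := by continuity
      have hcc := hc.tendsto 0
      simp only [mul_zero, zero_pow, add_zero, ne_eq, OfNat.ofNat_ne_zero,
        not_false_eq_true] at hcc
      have hcc' : Tendsto (fun z : ℝ => |c₃| * z^2 + K*z^4) (nhds 0) (nhds 0) := by
        convert hcc using 2 <;> simp
      exact hcc'.mono_left nhdsWithin_le_nhds
    have hle := ge_of_tendsto hlim hb
    exact abs_eq_zero.mp (le_antisymm (by linarith) (abs_nonneg c₁))
  refine ⟨hc1, ?_⟩
  have hb : ∀ᶠ z in nhdsWithin (0:ℝ) (Set.Ioi 0), |c₃| ≤ K*z^2 := by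
    filter_upwards [hev] with z hz
    obtain ⟨hz, hz'⟩ := hz
    have h2 := h1 z hz hz'
    rw [hc1, zero_add, abs_mul, abs_of_nonneg (sq_nonneg z)] at h2
    have hz2 : 0 < z^2 := by positivity
    nlinarith
  have hlim : Tendsto (fun z : ℝ => K*z^2) (nhdsWithin 0 (Set.Ioi 0)) (nhds 0) := by
    have hc : Continuous (fun z : ℝ => K*z^2) := by continuity
    have hcc := hc.tendsto 0
    have hcc' : Tendsto (fun z : ℝ => K*z^2) (nhds 0) (nhds 0) := by
      convert hcc using 2 <;> simp
    exact hcc'.mono_left nhdsWithin_le_nhds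
  have hle := ge_of_tendsto hlim hb
  exact abs_eq_zero.mp (le_antisymm (by linarith) (abs_nonneg c₃))


lemma est_aux (z w P m2 m4 a b K0 C2 D : ℝ) (hz : 0 < z) (hz1 : z ≤ 1)
    (hP : P = a*z + b*z^3)
    (h1 : |z + m2*w + m4*w^3| ≤ D*z^5)
    (h2 : |w - P| ≤ C2*z^5)
    (h3 : |w| ≤ K0*z) (hK : |a| + |b| ≤ K0) (hC2 : 0 ≤ C2) :
    |(1 + m2*a)*z + (m2*b + m4*a^3)*z^3|
      ≤ (D + |m2| *C2 + |m4| *C2*3*K0^2 + |m4| *(3*a^2*|b| + 3*|a| *b^2 + |b|^3)) * z^5 := by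
  have tri : ∀ x y : ℝ, |x - y| ≤ |x| + |y| := fun x y => by
    rw [sub_eq_add_neg]; exact (abs_add_le _ _).trans (by rw [abs_neg])
  have hK0 : 0 ≤ K0 := le_trans (by positivity) hK
  have hwK : |w| ≤ K0 := le_trans h3 (by nlinarith)
  have hPK : |P| ≤ K0 := by
    rw [hP]
    calc |a*z + b*z^3| ≤ |a*z| + |b*z^3| := abs_add_le _ _
      _ = |a| *z + |b| *z^3 := by
          rw [abs_mul, abs_mul, abs_pow, abs_of_pos hz]
      _ ≤ K0 := by nlinarith [abs_nonneg a, abs_nonneg b, pow_le_one₀ hz.le hz1 (n := 3)]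
  have hq : |w^2 + w*P + P^2| ≤ 3*K0^2 := by
    calc |w^2 + w*P + P^2| ≤ |w^2| + |w*P| + |P^2| := by
          refine le_trans (abs_add_le _ _) ?_
          gcongr
          exact abs_add_le _ _
      _ = |w|^2 + |w| *|P| + |P|^2 := by rw [abs_mul, abs_pow, abs_pow]
      _ ≤ 3*K0^2 := by nlinarith [abs_nonneg w, abs_nonneg P]
  have hdecomp : (1 + m2*a)*z + (m2*b + m4*a^3)*z^3
      = (z + m2*w + m4*w^3) - m2*(w - P) - m4*((w - P)*(w^2 + w*P + P^2))
        - m4*(3*a^2*b*z^5 + 3*a*b^2*z^7 + b^3*z^9) := by rw [hP]; ring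
  have t2 : |m2*(w-P)| ≤ |m2| *(C2*z^5) := by
    rw [abs_mul]; exact mul_le_mul_of_nonneg_left h2 (abs_nonneg _)
  have t3 : |m4*((w - P)*(w^2 + w*P + P^2))| ≤ |m4| *(C2*z^5*(3*K0^2)) := by
    rw [abs_mul, abs_mul]
    have hmm := mul_le_mul h2 hq (abs_nonneg _) (by positivity)
    exact mul_le_mul_of_nonneg_left hmm (abs_nonneg _)
  have t4 : |m4*(3*a^2*b*z^5 + 3*a*b^2*z^7 + b^3*z^9)|
      ≤ |m4| *((3*a^2*|b| + 3*|a| *b^2 + |b|^3)*z^5) := by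
    rw [abs_mul]
    refine mul_le_mul_of_nonneg_left ?_ (abs_nonneg _)
    have h5 : z^7 ≤ z^5 := pow_le_pow_of_le_one hz.le hz1 (by norm_num)
    have h6 : z^9 ≤ z^5 := pow_le_pow_of_le_one hz.le hz1 (by norm_num)
    have h7 : 0 ≤ z^5 := by positivity
    calc |3*a^2*b*z^5 + 3*a*b^2*z^7 + b^3*z^9|
        ≤ |3*a^2*b*z^5| + |3*a*b^2*z^7| + |b^3*z^9| := by
          refine le_trans (abs_add_le _ _) ?_
          gcongr
          exact abs_add_le _ _
      _ = 3*a^2*|b| *z^5 + 3*|a| *b^2*z^7 + |b|^3 *z^9 := by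
          simp only [abs_mul, abs_pow, abs_of_pos hz]
          rw [show |(3:ℝ)| = 3 from abs_of_pos (by norm_num), sq_abs a, sq_abs b]
      _ ≤ (3*a^2*|b| + 3*|a| *b^2 + |b|^3)*z^5 := by
          nlinarith [abs_nonneg a, abs_nonneg b, sq_nonneg a, sq_nonneg b,
            mul_nonneg (abs_nonneg a) (sq_nonneg b), pow_nonneg (abs_nonneg b) 3]
  rw [hdecomp]
  calc |(z + m2*w + m4*w^3) - m2*(w - P) - m4*((w - P)*(w^2 + w*P + P^2))
        - m4*(3*a^2*b*z^5 + 3*a*b^2*z^7 + b^3*z^9)|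
      ≤ |(z + m2*w + m4*w^3) - m2*(w - P) - m4*((w - P)*(w^2 + w*P + P^2))|
        + |m4*(3*a^2*b*z^5 + 3*a*b^2*z^7 + b^3*z^9)| := tri _ _
    _ ≤ |(z + m2*w + m4*w^3) - m2*(w - P)| + |m4*((w - P)*(w^2 + w*P + P^2))|
        + |m4*(3*a^2*b*z^5 + 3*a*b^2*z^7 + b^3*z^9)| := by
          gcongr
          exact tri _ _
    _ ≤ |z + m2*w + m4*w^3| + |m2*(w - P)| + |m4*((w - P)*(w^2 + w*P + P^2))|
        + |m4*(3*a^2*b*z^5 + 3*a*b^2*z^7 + b^3*z^9)| := by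
          gcongr
          exact tri _ _
    _ ≤ D*z^5 + |m2| *(C2*z^5) + |m4| *(C2*z^5*(3*K0^2))
        + |m4| *((3*a^2*|b| + 3*|a| *b^2 + |b|^3)*z^5) :=
          add_le_add (add_le_add (add_le_add h1 t2) t3) t4
    _ = (D + |m2| *C2 + |m4| *C2*3*K0^2 + |m4| *(3*a^2*|b| + 3*|a| *b^2 + |b|^3)) * z^5 := by
          ring

lemma Bexp_aux (lam C v : ℝ) (hlam : 1 < lam) (R : ℝ → ℝ) (εR : ℝ)
    (hRb : ∀ z : ℝ, |z| < εR → |R z - (z + (v-1)*z^3)| ≤ C*|z|^5)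
    (z : ℝ) (hz : 0 < z) (hz1 : z < εR) (hz2 : z ≤ 1/(2*lam)) :
    |R z + (1 - Real.sqrt (1 + 4*lam^2*z^2))/(2*z) - ((1-lam^2)*z + (v-1+lam^4)*z^3)|
      ≤ (C + 4*lam^6)*z^5 := by
  have hlam0 : (0:ℝ) < lam := by linarith
  have hzne : z ≠ 0 := ne_of_gt hz
  have hu0 : 0 ≤ 4*lam^2*z^2 := by positivity
  have hu1 : 4*lam^2*z^2 ≤ 1 := by
    have h : z*lam ≤ 1/2 := by
      calc z*lam ≤ 1/(2*lam)*lam := mul_le_mul_of_nonneg_right hz2 hlam0.le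
        _ = 1/2 := by field_simp
    nlinarith [mul_pos hz hlam0]
  have hsq := sqrt_aux (4*lam^2*z^2) hu0 hu1
  have hRz := hRb z (by rw [abs_of_pos hz]; exact hz1)
  rw [abs_of_pos hz] at hRz
  have h2 : (1 - Real.sqrt (1 + 4*lam^2*z^2))/(2*z) - (-(lam^2)*z + lam^4*z^3)
      = -((Real.sqrt (1 + 4*lam^2*z^2) - (1 + (4*lam^2*z^2)/2 - (4*lam^2*z^2)^2/8))/(2*z)) := by
    field_simp
    ring
  have h3 : |(1 - Real.sqrt (1 + 4*lam^2*z^2))/(2*z) - (-(lam^2)*z + lam^4*z^3)|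
      ≤ 4*lam^6*z^5 := by
    rw [h2, abs_neg, abs_div]
    rw [abs_of_pos (show (0:ℝ) < 2*z by linarith)]
    have h4 := hsq
    have h5 : (4*lam^2*z^2)^3/8 = 8*lam^6*z^6 := by ring
    rw [h5] at h4
    calc |Real.sqrt (1 + 4*lam^2*z^2) - (1 + 4*lam^2*z^2/2 - (4*lam^2*z^2)^2/8)|/(2*z)
        ≤ (8*lam^6*z^6)/(2*z) := by
          exact (div_le_div_iff_of_pos_right (show (0:ℝ) < 2*z by linarith)).mpr h4
      _ = 4*lam^6*z^5 := by
          field_simp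
          ring
  have hdec : R z + (1 - Real.sqrt (1 + 4*lam^2*z^2))/(2*z) - ((1-lam^2)*z + (v-1+lam^4)*z^3)
      = (R z - (z + (v-1)*z^3))
        + ((1 - Real.sqrt (1 + 4*lam^2*z^2))/(2*z) - (-(lam^2)*z + lam^4*z^3)) := by
    ring
  rw [hdec]
  calc |_ + _| ≤ |R z - (z + (v-1)*z^3)|
        + |(1 - Real.sqrt (1 + 4*lam^2*z^2))/(2*z) - (-(lam^2)*z + lam^4*z^3)| := abs_add_le _ _
    _ ≤ C*z^5 + 4*lam^6*z^5 := add_le_add hRz h3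
    _ = (C + 4*lam^6)*z^5 := by ring


lemma int_aux (δ M : ℝ) (hδ : 0 < δ) (μ : Measure ℝ) [IsProbabilityMeasure μ]
    (hsupp : ∀ᵐ x ∂μ, δ ≤ |x| ∧ |x| ≤ M) (k : ℕ) :
    Integrable (fun x : ℝ => (x^k)⁻¹) μ := by
  refine Integrable.mono' (integrable_const ((δ^k)⁻¹))
    ((measurable_id.pow_const k).inv.aestronglyMeasurable) ?_
  filter_upwards [hsupp] with x hx
  have hx1 := hx.1
  have h1 : ‖(x^k)⁻¹‖ = (|x|^k)⁻¹ := by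
    rw [Real.norm_eq_abs, abs_inv, abs_pow]
  rw [h1]
  exact inv_anti₀ (pow_pos hδ k) (pow_le_pow_left₀ hδ.le hx1 k)

lemma odd_aux (μ : Measure ℝ) [IsProbabilityMeasure μ]
    (hsym : μ.map (fun x => -x) = μ) (k : ℕ) (hk : Odd k) :
    ∫ x, (x^k)⁻¹ ∂μ = 0 := by
  have h1 : ∫ x, (x^k)⁻¹ ∂μ = ∫ x, ((-x)^k)⁻¹ ∂μ := by
    conv_lhs => rw [← hsym]
    rw [integral_map (f := fun x : ℝ => (x^k)⁻¹) (measurable_neg.aemeasurable)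
      (((measurable_id'.pow_const k).inv).aestronglyMeasurable)]
  have h2 : ∀ x : ℝ, ((-x)^k)⁻¹ = -((x^k)⁻¹) := by
    intro x
    rw [hk.neg_pow, inv_neg]
  simp only [h2, integral_neg] at h1
  linarith

lemma Gexp_aux (δ M : ℝ) (hδ : 0 < δ) (μ : Measure ℝ) [IsProbabilityMeasure μ]
    (hsupp : ∀ᵐ x ∂μ, δ ≤ |x| ∧ |x| ≤ M)
    (hsym : μ.map (fun x => -x) = μ)
    (w : ℝ) (hw : |w| ≤ δ/2) :
    |(∫ x, (w - x)⁻¹ ∂μ) + (∫ x, (x^2)⁻¹ ∂μ)*w + (∫ x, (x^4)⁻¹ ∂μ)*w^3|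
      ≤ (2/δ^6) * |w|^5 := by
  have hint := int_aux δ M hδ μ hsupp
  have hintw : Integrable (fun x : ℝ => (w - x)⁻¹) μ := by
    refine Integrable.mono' (integrable_const ((δ/2)⁻¹))
      ((measurable_const.sub measurable_id).inv.aestronglyMeasurable) ?_
    filter_upwards [hsupp] with x hx
    have h1 : δ/2 ≤ |w - x| := by
      have := abs_sub_abs_le_abs_sub x w
      rw [abs_sub_comm] at this
      linarith [hx.1]
    rw [Real.norm_eq_abs, abs_inv]
    exact inv_anti₀ (by linarith) h1
  set F : ℝ → ℝ := fun x => (w-x)⁻¹ + ((x^1)⁻¹ + w*(x^2)⁻¹ + w^2*(x^3)⁻¹ + w^3*(x^4)⁻¹ + w^4*(x^5)⁻¹) with hF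
  have hintk : ∀ (c : ℝ) (k : ℕ), Integrable (fun x : ℝ => c*(x^k)⁻¹) μ :=
    fun c k => (hint k).const_mul c
  have i2 : Integrable (fun x : ℝ => (x^1)⁻¹ + w*(x^2)⁻¹) μ := by
    exact (hint 1).add (hintk w 2)
  have i3 : Integrable (fun x : ℝ => (x^1)⁻¹ + w*(x^2)⁻¹ + w^2*(x^3)⁻¹) μ := by
    exact i2.add (hintk (w^2) 3)
  have i4 : Integrable (fun x : ℝ => (x^1)⁻¹ + w*(x^2)⁻¹ + w^2*(x^3)⁻¹ + w^3*(x^4)⁻¹) μ := by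
    exact i3.add (hintk (w^3) 4)
  have i5 : Integrable (fun x : ℝ => (x^1)⁻¹ + w*(x^2)⁻¹ + w^2*(x^3)⁻¹ + w^3*(x^4)⁻¹ + w^4*(x^5)⁻¹) μ := by
    exact i4.add (hintk (w^4) 5)
  have hFeq : ∫ x, F x ∂μ
      = (∫ x, (w - x)⁻¹ ∂μ) + (∫ x, (x^2)⁻¹ ∂μ)*w + (∫ x, (x^4)⁻¹ ∂μ)*w^3 := by
    simp only [hF]
    rw [integral_add hintw i5, integral_add i4 (hintk (w^4) 5),
      integral_add i3 (hintk (w^3) 4), integral_add i2 (hintk (w^2) 3),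
      integral_add (hint 1) (hintk w 2)]
    rw [integral_const_mul, integral_const_mul, integral_const_mul, integral_const_mul]
    rw [odd_aux μ hsym 1 (by decide), odd_aux μ hsym 3 (by decide), odd_aux μ hsym 5 (by decide)]
    ring
  rw [← hFeq]
  have hbound : ∀ᵐ x ∂μ, ‖F x‖ ≤ (2/δ^6) * |w|^5 := by
    filter_upwards [hsupp] with x hx
    have hx1 := hx.1
    have hxne : x ≠ 0 := by
      intro h; rw [h] at hx1; simp at hx1; linarith
    have hwx : δ/2 ≤ |w - x| := by
      have := abs_sub_abs_le_abs_sub x w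
      rw [abs_sub_comm] at this
      linarith
    have hwxne : w - x ≠ 0 := by
      intro h; rw [h] at hwx; simp at hwx; linarith
    have hFx : F x = w^5 * ((x^5)⁻¹ * (w - x)⁻¹) := by
      rw [hF]
      field_simp
      ring
    rw [hFx, Real.norm_eq_abs, abs_mul, abs_mul, abs_inv, abs_inv, abs_pow, abs_pow]
    have h2 : (|x|^5)⁻¹ ≤ (δ^5)⁻¹ :=
      inv_anti₀ (pow_pos hδ 5) (pow_le_pow_left₀ hδ.le hx1 5)
    have h3 : |w - x|⁻¹ ≤ (δ/2)⁻¹ := inv_anti₀ (by linarith) hwx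
    have h4 : (0:ℝ) ≤ |w|^5 := by positivity
    calc |w|^5 * ((|x|^5)⁻¹ * |w-x|⁻¹)
        ≤ |w|^5 * ((δ^5)⁻¹ * (δ/2)⁻¹) := by
          apply mul_le_mul_of_nonneg_left _ h4
          apply mul_le_mul h2 h3 (by positivity) (by positivity)
      _ = (2/δ^6) * |w|^5 := by field_simp
  have := norm_integral_le_of_norm_le_const hbound (μ := μ) (f := F)
  simpa [measure_univ] using this


/-- Let `μ_λ` be a symmetric compactly supported Borel probability measure on `ℝ` supported
outside `(−δ, δ)`, and suppose its Cauchy transform is inverse (near 0) to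
`B_λ(z) = R_μ(z) + (1 − √(1+4λ²z²))/(2z)` where `R_μ(z) = z + (v−1)z³ + O(z⁵)`.
Then `m_{−2}(μ_λ) = 1/(λ²−1)` and `m_{−4}(μ_λ) = (λ⁴ − 1 + v)/(λ²−1)⁴`. -/
theorem stmt17 (lam v δ M : ℝ) (hlam : 1 < lam) (hv : 0 < v) (hδ : 0 < δ)
    (μ : Measure ℝ) [IsProbabilityMeasure μ]
    (hsym : μ.map (fun x => -x) = μ)
    (hsupp : ∀ᵐ x ∂μ, δ ≤ |x| ∧ |x| ≤ M)
    (R : ℝ → ℝ)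
    (hR : ∃ C ε : ℝ, 0 < ε ∧ ∀ z : ℝ, |z| < ε →
      |R z - (z + (v - 1) * z ^ 3)| ≤ C * |z| ^ 5)
    (hG : ∃ ε : ℝ, 0 < ε ∧ ∀ z : ℝ, z ≠ 0 → |z| < ε →
      ∫ x, (R z + (1 - Real.sqrt (1 + 4 * lam ^ 2 * z ^ 2)) / (2 * z) - x)⁻¹ ∂μ = z) :
    (∫ x, (x ^ 2)⁻¹ ∂μ) = 1 / (lam ^ 2 - 1) ∧
    (∫ x, (x ^ 4)⁻¹ ∂μ) = (lam ^ 4 - 1 + v) / (lam ^ 2 - 1) ^ 4 := by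
  obtain ⟨C, εR, hεR, hRb⟩ := hR
  obtain ⟨εG, hεG, hGeq⟩ := hG
  have hlam0 : (0:ℝ) < lam := by linarith
  have hC : 0 ≤ C := by
    have h := hRb (εR/2) (by rw [abs_of_pos (by linarith : (0:ℝ) < εR/2)]; linarith)
    have hne : εR/2 ≠ 0 := ne_of_gt (by linarith)
    have hp : 0 < |εR/2|^5 := pow_pos (abs_pos.mpr hne) 5
    nlinarith [abs_nonneg (R (εR/2) - (εR/2 + (v-1)*(εR/2)^3))]
  set m2 := ∫ x, (x ^ 2)⁻¹ ∂μ with hm2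
  set m4 := ∫ x, (x ^ 4)⁻¹ ∂μ with hm4
  set C2 : ℝ := C + 4*lam^6 with hC2def
  have hC2 : 0 < C2 := by rw [hC2def]; positivity
  set K0 : ℝ := |1-lam^2| + |v-1+lam^4| + C2 + 1 with hK0def
  have hK0pos : 0 < K0 := by
    rw [hK0def]
    have := abs_nonneg (1-lam^2)
    have := abs_nonneg (v-1+lam^4)
    linarith
  set ε₀ := min (min εR εG) (min (1/(2*lam)) (min 1 (δ/(2*K0)))) with hε₀def
  have hε₀ : 0 < ε₀ :=
    lt_min (lt_min hεR hεG) (lt_min (by positivity) (lt_min one_pos (by positivity)))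
  have key : ∀ z : ℝ, 0 < z → z < ε₀ →
      |(1 + m2*(1-lam^2))*z + (m2*(v-1+lam^4) + m4*(1-lam^2)^3)*z^3|
        ≤ ((2/δ^6)*K0^5 + |m2| *C2 + |m4| *C2*3*K0^2
            + |m4| *(3*(1-lam^2)^2*|v-1+lam^4| + 3*|1-lam^2| *(v-1+lam^4)^2 + |v-1+lam^4|^3))*z^5 := by
    intro z hz hzε
    have hzR : z < εR := lt_of_lt_of_le hzε (le_trans (min_le_left _ _) (min_le_left _ _))
    have hzG : z < εG := lt_of_lt_of_le hzε (le_trans (min_le_left _ _) (min_le_right _ _))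
    have hz2 : z ≤ 1/(2*lam) :=
      le_of_lt (lt_of_lt_of_le hzε (le_trans (min_le_right _ _) (min_le_left _ _)))
    have hz1 : z ≤ 1 :=
      le_of_lt (lt_of_lt_of_le hzε
        (le_trans (min_le_right _ _) (le_trans (min_le_right _ _) (min_le_left _ _))))
    have hzδ : z ≤ δ/(2*K0) :=
      le_of_lt (lt_of_lt_of_le hzε
        (le_trans (min_le_right _ _) (le_trans (min_le_right _ _) (min_le_right _ _))))
    have hBe := Bexp_aux lam C v hlam R εR hRb z hz hzR hz2
    set w := R z + (1 - Real.sqrt (1 + 4*lam^2*z^2))/(2*z) with hwdef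
    have hz5 : z^5 ≤ z := by
      have := pow_le_pow_of_le_one hz.le hz1 (show 1 ≤ 5 by norm_num)
      rwa [pow_one] at this
    have hz3 : z^3 ≤ z := by
      have := pow_le_pow_of_le_one hz.le hz1 (show 1 ≤ 3 by norm_num)
      rwa [pow_one] at this
    have hwK : |w| ≤ K0*z := by
      have hP : |(1-lam^2)*z + (v-1+lam^4)*z^3| ≤ (|1-lam^2| + |v-1+lam^4|)*z := by
        calc |(1-lam^2)*z + (v-1+lam^4)*z^3|
            ≤ |(1-lam^2)*z| + |(v-1+lam^4)*z^3| := abs_add_le _ _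
          _ = |1-lam^2| *z + |v-1+lam^4| *z^3 := by
              rw [abs_mul, abs_mul, abs_pow, abs_of_pos hz]
          _ ≤ (|1-lam^2| + |v-1+lam^4|)*z := by
              nlinarith [abs_nonneg (v-1+lam^4)]
      have htri : |w| ≤ |w - ((1-lam^2)*z + (v-1+lam^4)*z^3)|
          + |(1-lam^2)*z + (v-1+lam^4)*z^3| := by
        calc |w| = |(w - ((1-lam^2)*z + (v-1+lam^4)*z^3)) + ((1-lam^2)*z + (v-1+lam^4)*z^3)| := by
              congr 1; ring
          _ ≤ _ := abs_add_le _ _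
      have hC2z : C2*z^5 ≤ C2*z := mul_le_mul_of_nonneg_left hz5 hC2.le
      rw [hK0def]
      have := hBe
      rw [hC2def] at hC2z ⊢
      nlinarith [abs_nonneg w]
    have hwδ : |w| ≤ δ/2 := by
      refine le_trans hwK ?_
      calc K0*z ≤ K0*(δ/(2*K0)) := mul_le_mul_of_nonneg_left hzδ hK0pos.le
        _ = δ/2 := by field_simp
    have hGz := hGeq z (ne_of_gt hz) (by rw [abs_of_pos hz]; exact hzG)
    rw [show R z + (1 - Real.sqrt (1 + 4 * lam ^ 2 * z ^ 2)) / (2 * z) = w from hwdef.symm] at hGz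
    have hGB := Gexp_aux δ M hδ μ hsupp hsym w hwδ
    rw [hGz, ← hm2, ← hm4] at hGB
    have hD : |z + m2*w + m4*w^3| ≤ ((2/δ^6)*K0^5)*z^5 := by
      refine le_trans hGB ?_
      have h5 : |w|^5 ≤ (K0*z)^5 := pow_le_pow_left₀ (abs_nonneg w) hwK 5
      calc (2/δ^6) * |w|^5 ≤ (2/δ^6)*(K0*z)^5 :=
            mul_le_mul_of_nonneg_left h5 (by positivity)
        _ = ((2/δ^6)*K0^5)*z^5 := by ring
    have hKle : |1-lam^2| + |v-1+lam^4| ≤ K0 := by rw [hK0def]; linarith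
    exact est_aux z w ((1-lam^2)*z + (v-1+lam^4)*z^3) m2 m4 (1-lam^2) (v-1+lam^4)
      K0 C2 ((2/δ^6)*K0^5) hz hz1 rfl hD hBe hwK hKle hC2.le
  obtain ⟨hc1, hc3⟩ := coeff_aux _ _ _ _ hε₀ key
  have hne2 : lam^2 - 1 ≠ 0 := by nlinarith
  have hm2e : m2*(lam^2-1) = 1 := by linear_combination -hc1
  constructor
  · rw [eq_div_iff hne2]; exact hm2e
  · rw [eq_div_iff (pow_ne_zero 4 hne2)]
    linear_combination (-(lam^2-1))*hc3 + (v-1+lam^4)*hm2e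
end
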